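/- Let Q_T = Q₂ + span{φ₁, φ₂, φ₃} on T̂ = [−1,1]², where Q₂ is the space of biquadratic polynomials, φ₁(ξ,η) = ξ⁴(1−η²), φ₂(ξ,η) = η³(1−ξ²), φ₃(ξ,η) = (ξ+η)(1−ξ²)(1−η²). Then the twelve functionals v ↦ v(a_i) (vertices a_i), v ↦ v(m_i) (edge midpoints m_i), and v ↦ ∫_{e_i} ∂v/∂n ds (edges e_i), i = 1,…,4, are unisolvent on Q_T: any v ∈ Q_T with all twelve values zero vanishes identically. -/

import Mathlib

open MeasureTheory intervalIntegral

/-- A generic element of the shape function space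
`Q_T = Q₂ + span{φ₁, φ₂, φ₃}` of the extended high order rectangular Morley
element, where `φ₁ = ξ⁴(1-η²)`, `φ₂ = η³(1-ξ²)`, `φ₃ = (ξ+η)(1-ξ²)(1-η²)`. -/
noncomputable def extShape (c : Fin 12 → ℝ) (ξ η : ℝ) : ℝ :=
  c 0 + c 1 * ξ + c 2 * η + c 3 * ξ^2 + c 4 * (ξ*η) + c 5 * η^2 +
    c 6 * (ξ^2*η) + c 7 * (ξ*η^2) + c 8 * (ξ^2*η^2) +
    c 9 * (ξ^4 * (1 - η^2)) + c 10 * (η^3 * (1 - ξ^2)) +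
    c 11 * ((ξ + η) * (1 - ξ^2) * (1 - η^2))

lemma extShape_hasDerivAt_xi (c : Fin 12 → ℝ) (η x : ℝ) :
    HasDerivAt (fun ξ => extShape c ξ η)
      (c 1 + c 3 * (2*x) + c 4 * η + c 6 * (2*x*η) + c 7 * η^2 +
        c 8 * (2*x*η^2) + c 9 * (4*x^3*(1-η^2)) + c 10 * (η^3 * (-(2*x))) +
        c 11 * ((1-η^2) * (1 - 3*x^2 - 2*x*η))) x := by
  have h0 : HasDerivAt (fun _ : ℝ => c 0) 0 x := hasDerivAt_const _ _
  have h1 : HasDerivAt (fun ξ : ℝ => c 1 * ξ) (c 1 * 1) x :=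
    (hasDerivAt_id x).const_mul _
  have h2 : HasDerivAt (fun _ : ℝ => c 2 * η) 0 x := hasDerivAt_const _ _
  have h3 : HasDerivAt (fun ξ : ℝ => c 3 * ξ^2) (c 3 * (2 * x^1)) x :=
    (hasDerivAt_pow 2 x).const_mul _
  have h4 : HasDerivAt (fun ξ : ℝ => c 4 * (ξ * η)) (c 4 * (1 * η)) x :=
    ((hasDerivAt_id x).mul_const η).const_mul _
  have h5 : HasDerivAt (fun _ : ℝ => c 5 * η^2) 0 x := hasDerivAt_const _ _
  have h6 : HasDerivAt (fun ξ : ℝ => c 6 * (ξ^2 * η)) (c 6 * (2 * x^1 * η)) x :=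
    ((hasDerivAt_pow 2 x).mul_const η).const_mul _
  have h7 : HasDerivAt (fun ξ : ℝ => c 7 * (ξ * η^2)) (c 7 * (1 * η^2)) x :=
    ((hasDerivAt_id x).mul_const (η^2)).const_mul _
  have h8 : HasDerivAt (fun ξ : ℝ => c 8 * (ξ^2 * η^2)) (c 8 * (2 * x^1 * η^2)) x :=
    ((hasDerivAt_pow 2 x).mul_const (η^2)).const_mul _
  have h9 : HasDerivAt (fun ξ : ℝ => c 9 * (ξ^4 * (1 - η^2)))
      (c 9 * (4 * x^3 * (1 - η^2))) x :=
    ((hasDerivAt_pow 4 x).mul_const (1 - η^2)).const_mul _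
  have h10 : HasDerivAt (fun ξ : ℝ => c 10 * (η^3 * (1 - ξ^2)))
      (c 10 * (η^3 * (0 - 2 * x^1))) x :=
    (((hasDerivAt_const x (1:ℝ)).sub (hasDerivAt_pow 2 x)).const_mul (η^3)).const_mul _
  have h11 : HasDerivAt (fun ξ : ℝ => c 11 * ((ξ + η) * (1 - ξ^2) * (1 - η^2)))
      (c 11 * ((1 * (1 - x^2) + (x + η) * (0 - 2 * x^1)) * (1 - η^2))) x :=
    ((((hasDerivAt_id x).add_const η).mul
      ((hasDerivAt_const x (1:ℝ)).sub (hasDerivAt_pow 2 x))).mul_const (1 - η^2)).const_mul _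
  have H := ((((((((((h0.add h1).add h2).add h3).add h4).add h5).add h6).add
    h7).add h8).add h9).add h10).add h11
  have hfun : (fun ξ => extShape c ξ η) =
      (fun ξ : ℝ => c 0 + c 1 * ξ + c 2 * η + c 3 * ξ^2 + c 4 * (ξ*η) + c 5 * η^2 +
        c 6 * (ξ^2*η) + c 7 * (ξ*η^2) + c 8 * (ξ^2*η^2) +
        c 9 * (ξ^4 * (1 - η^2)) + c 10 * (η^3 * (1 - ξ^2)) +
        c 11 * ((ξ + η) * (1 - ξ^2) * (1 - η^2))) := by
    funext ξ; rfl
  rw [hfun]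
  exact H.congr_deriv (by ring)

lemma extShape_hasDerivAt_eta (c : Fin 12 → ℝ) (ξ y : ℝ) :
    HasDerivAt (fun η => extShape c ξ η)
      (c 2 + c 4 * ξ + c 5 * (2*y) + c 6 * ξ^2 + c 7 * (2*ξ*y) +
        c 8 * (2*ξ^2*y) + c 9 * (ξ^4 * (-(2*y))) + c 10 * (3*y^2*(1-ξ^2)) +
        c 11 * ((1-ξ^2) * (1 - 3*y^2 - 2*ξ*y))) y := by
  have h0 : HasDerivAt (fun _ : ℝ => c 0) 0 y := hasDerivAt_const _ _
  have h1 : HasDerivAt (fun _ : ℝ => c 1 * ξ) 0 y := hasDerivAt_const _ _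
  have h2 : HasDerivAt (fun η : ℝ => c 2 * η) (c 2 * 1) y :=
    (hasDerivAt_id y).const_mul _
  have h3 : HasDerivAt (fun _ : ℝ => c 3 * ξ^2) 0 y := hasDerivAt_const _ _
  have h4 : HasDerivAt (fun η : ℝ => c 4 * (ξ * η)) (c 4 * (ξ * 1)) y :=
    (((hasDerivAt_id y).const_mul ξ)).const_mul _
  have h5 : HasDerivAt (fun η : ℝ => c 5 * η^2) (c 5 * (2 * y^1)) y :=
    (hasDerivAt_pow 2 y).const_mul _
  have h6 : HasDerivAt (fun η : ℝ => c 6 * (ξ^2 * η)) (c 6 * (ξ^2 * 1)) y :=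
    (((hasDerivAt_id y).const_mul (ξ^2))).const_mul _
  have h7 : HasDerivAt (fun η : ℝ => c 7 * (ξ * η^2)) (c 7 * (ξ * (2 * y^1))) y :=
    (((hasDerivAt_pow 2 y).const_mul ξ)).const_mul _
  have h8 : HasDerivAt (fun η : ℝ => c 8 * (ξ^2 * η^2)) (c 8 * (ξ^2 * (2 * y^1))) y :=
    (((hasDerivAt_pow 2 y).const_mul (ξ^2))).const_mul _
  have h9 : HasDerivAt (fun η : ℝ => c 9 * (ξ^4 * (1 - η^2)))
      (c 9 * (ξ^4 * (0 - 2 * y^1))) y :=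
    ((((hasDerivAt_const y (1:ℝ)).sub (hasDerivAt_pow 2 y)).const_mul (ξ^4))).const_mul _
  have h10 : HasDerivAt (fun η : ℝ => c 10 * (η^3 * (1 - ξ^2)))
      (c 10 * (3 * y^2 * (1 - ξ^2))) y :=
    ((hasDerivAt_pow 3 y).mul_const (1 - ξ^2)).const_mul _
  have h11 : HasDerivAt (fun η : ℝ => c 11 * ((ξ + η) * (1 - ξ^2) * (1 - η^2)))
      (c 11 * (((0 + 1) * (1 - ξ^2)) * (1 - y^2) +
        ((ξ + y) * (1 - ξ^2)) * (0 - 2 * y^1))) y := by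
    have hA : HasDerivAt (fun η : ℝ => (ξ + η) * (1 - ξ^2)) ((0 + 1) * (1 - ξ^2)) y :=
      ((hasDerivAt_const y ξ).add (hasDerivAt_id y)).mul_const _
    have hB : HasDerivAt (fun η : ℝ => 1 - η^2) (0 - 2 * y^1) y :=
      (hasDerivAt_const y (1:ℝ)).sub (hasDerivAt_pow 2 y)
    exact (hA.mul hB).const_mul _
  have H := ((((((((((h0.add h1).add h2).add h3).add h4).add h5).add h6).add
    h7).add h8).add h9).add h10).add h11
  have hfun : (fun η => extShape c ξ η) =
      (fun η : ℝ => c 0 + c 1 * ξ + c 2 * η + c 3 * ξ^2 + c 4 * (ξ*η) + c 5 * η^2 +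
        c 6 * (ξ^2*η) + c 7 * (ξ*η^2) + c 8 * (ξ^2*η^2) +
        c 9 * (ξ^4 * (1 - η^2)) + c 10 * (η^3 * (1 - ξ^2)) +
        c 11 * ((ξ + η) * (1 - ξ^2) * (1 - η^2))) := by
    funext η; rfl
  rw [hfun]
  exact H.congr_deriv (by ring)

lemma quartic_integral (a b d e f : ℝ) :
    (∫ x in (-1:ℝ)..1, (a + b*x + d*x^2 + e*x^3 + f*x^4)) =
      2*a + 2*d/3 + 2*f/5 := by
  have hF : ∀ x ∈ Set.uIcc (-1:ℝ) 1,
      HasDerivAt (fun x : ℝ => a*x + b*x^2/2 + d*x^3/3 + e*x^4/4 + f*x^5/5)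
        (a + b*x + d*x^2 + e*x^3 + f*x^4) x := by
    intro x _
    have h1 : HasDerivAt (fun x : ℝ => a * x) (a * 1) x :=
      (hasDerivAt_id x).const_mul _
    have h2 : HasDerivAt (fun x : ℝ => b * x^2 / 2) (b * (2 * x^1) / 2) x :=
      ((hasDerivAt_pow 2 x).const_mul b).div_const 2
    have h3 : HasDerivAt (fun x : ℝ => d * x^3 / 3) (d * (3 * x^2) / 3) x :=
      ((hasDerivAt_pow 3 x).const_mul d).div_const 3
    have h4 : HasDerivAt (fun x : ℝ => e * x^4 / 4) (e * (4 * x^3) / 4) x :=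
      ((hasDerivAt_pow 4 x).const_mul e).div_const 4
    have h5 : HasDerivAt (fun x : ℝ => f * x^5 / 5) (f * (5 * x^4) / 5) x :=
      ((hasDerivAt_pow 5 x).const_mul f).div_const 5
    have H := (((h1.add h2).add h3).add h4).add h5
    exact H.congr_deriv (by ring)
  have hcont : IntervalIntegrable
      (fun x : ℝ => a + b*x + d*x^2 + e*x^3 + f*x^4) volume (-1) 1 := by
    apply Continuous.intervalIntegrable
    fun_prop
  rw [intervalIntegral.integral_eq_sub_of_hasDerivAt hF hcont]
  ring

set_option maxHeartbeats 1600000 in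
/-- Unisolvence of the extended high order rectangular Morley element on
`T̂ = [-1,1]²`: if the four vertex values, the four edge midpoint values, and
the four edge integrals of the outward normal derivative of `v ∈ Q_T` all
vanish, then `v ≡ 0`. -/
theorem extended_morley_unisolvent (c : Fin 12 → ℝ)
    (hv1 : extShape c (-1) (-1) = 0) (hv2 : extShape c 1 (-1) = 0)
    (hv3 : extShape c 1 1 = 0) (hv4 : extShape c (-1) 1 = 0)
    (hm1 : extShape c 1 0 = 0) (hm2 : extShape c 0 1 = 0)
    (hm3 : extShape c (-1) 0 = 0) (hm4 : extShape c 0 (-1) = 0)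
    -- edge e₁ = {ξ = 1}, outward normal derivative ∂/∂ξ
    (he1 : (∫ η in (-1:ℝ)..1, deriv (fun ξ => extShape c ξ η) 1) = 0)
    -- edge e₂ = {η = 1}, outward normal derivative ∂/∂η
    (he2 : (∫ ξ in (-1:ℝ)..1, deriv (fun η => extShape c ξ η) 1) = 0)
    -- edge e₃ = {ξ = -1}, outward normal derivative -∂/∂ξ
    (he3 : (∫ η in (-1:ℝ)..1, -deriv (fun ξ => extShape c ξ η) (-1)) = 0)
    -- edge e₄ = {η = -1}, outward normal derivative -∂/∂η
    (he4 : (∫ ξ in (-1:ℝ)..1, -deriv (fun η => extShape c ξ η) (-1)) = 0) :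
    ∀ ξ η : ℝ, extShape c ξ η = 0 := by
  -- Rewrite the edge integrals as explicit polynomial integrals.
  have key1 : (∫ η in (-1:ℝ)..1, deriv (fun ξ => extShape c ξ η) 1)
      = ∫ η in (-1:ℝ)..1,
        ((c 1 + 2*c 3 + 4*c 9 - 2*c 11) + (c 4 + 2*c 6 - 2*c 11)*η +
          (c 7 + 2*c 8 - 4*c 9 + 2*c 11)*η^2 + (-2*c 10 + 2*c 11)*η^3 +
          (0:ℝ)*η^4) := by
    apply intervalIntegral.integral_congr
    intro η _
    dsimp only
    rw [(extShape_hasDerivAt_xi c η 1).deriv]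
    ring
  have key3 : (∫ η in (-1:ℝ)..1, -deriv (fun ξ => extShape c ξ η) (-1))
      = ∫ η in (-1:ℝ)..1,
        ((-c 1 + 2*c 3 + 4*c 9 + 2*c 11) + (-c 4 + 2*c 6 - 2*c 11)*η +
          (-c 7 + 2*c 8 - 4*c 9 - 2*c 11)*η^2 + (-2*c 10 + 2*c 11)*η^3 +
          (0:ℝ)*η^4) := by
    apply intervalIntegral.integral_congr
    intro η _
    dsimp only
    rw [(extShape_hasDerivAt_xi c η (-1)).deriv]
    ring
  have key2 : (∫ ξ in (-1:ℝ)..1, deriv (fun η => extShape c ξ η) 1)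
      = ∫ ξ in (-1:ℝ)..1,
        ((c 2 + 2*c 5 + 3*c 10 - 2*c 11) + (c 4 + 2*c 7 - 2*c 11)*ξ +
          (c 6 + 2*c 8 - 3*c 10 + 2*c 11)*ξ^2 + (2*c 11)*ξ^3 +
          (-2*c 9)*ξ^4) := by
    apply intervalIntegral.integral_congr
    intro ξ _
    dsimp only
    rw [(extShape_hasDerivAt_eta c ξ 1).deriv]
    ring
  have key4 : (∫ ξ in (-1:ℝ)..1, -deriv (fun η => extShape c ξ η) (-1))
      = ∫ ξ in (-1:ℝ)..1,
        ((-c 2 + 2*c 5 - 3*c 10 + 2*c 11) + (-c 4 + 2*c 7 - 2*c 11)*ξ +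
          (-c 6 + 2*c 8 + 3*c 10 - 2*c 11)*ξ^2 + (2*c 11)*ξ^3 +
          (-2*c 9)*ξ^4) := by
    apply intervalIntegral.integral_congr
    intro ξ _
    dsimp only
    rw [(extShape_hasDerivAt_eta c ξ (-1)).deriv]
    ring
  rw [key1, quartic_integral] at he1
  rw [key2, quartic_integral] at he2
  rw [key3, quartic_integral] at he3
  rw [key4, quartic_integral] at he4
  norm_num [extShape] at hv1 hv2 hv3 hv4 hm1 hm2 hm3 hm4
  have h0 : c 0 = 0 := by linarith
  have h1 : c 1 = 0 := by linarith
  have h2 : c 2 = 0 := by linarith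
  have h3 : c 3 = 0 := by linarith
  have h4 : c 4 = 0 := by linarith
  have h5 : c 5 = 0 := by linarith
  have h6 : c 6 = 0 := by linarith
  have h7 : c 7 = 0 := by linarith
  have h8 : c 8 = 0 := by linarith
  have h9 : c 9 = 0 := by linarith
  have h10 : c 10 = 0 := by linarith
  have h11 : c 11 = 0 := by linarith
  intro ξ η
  simp [extShape, h0, h1, h2, h3, h4, h5, h6, h7, h8, h9, h10, h11]
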